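/- Let Γ be a group, G a finitely generated nilpotent group, α an inner automorphism of Γ, L an automorphism of G with trivial fixed subgroup Fix(L) = {1}, and ρ : Γ → C(G) a homomorphism into the center of G. Let φ be the automorphism of Γ × G given by φ(γ, g) = (α(γ), ρ(γ)·L(g)). Define ψ : C(G) → C(G) by ψ(g) = L(g)·g⁻¹ (which is injective since Fix(L) is trivial), set Γ' := ρ⁻¹(ψ(C(G))), and let θ := ψ⁻¹ ∘ ρ : Γ' → C(G). Then the map h(γ, g) = (γ, θ(γ)·g) is an automorphism of Γ' × G, φ restricts to an automorphism of Γ' × G, and h ∘ φ ∘ h⁻¹ = (α|_{Γ'}) × L on Γ' × G, i.e. h(φ(h⁻¹(γ, g))) = (α(γ), L(g)) for all (γ, g) ∈ Γ' × G. In particular, Γ' = Γ when ψ is surjective. -/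

import Mathlib

private lemma keycomm {G : Type*} [Group G] (c d : Subgroup.center G) (x y : G) :
    (c : G) * (d : G) * (x * y) = ((c : G) * x) * ((d : G) * y) := by
  have hc := Subgroup.mem_center_iff.mp d.2 x
  rw [mul_assoc, mul_assoc, ← mul_assoc (d : G) x y, ← hc, mul_assoc x (d : G) y]



/-- Lemma 2.3 in the paper. Let `Γ` be a group, `G` a finitely
generated nilpotent group, `α` the inner automorphism of `Γ` given by conjugation
by `γ₀`, `L : G ≃* G` an automorphism with trivial fixed subgroup, and
`ρ : Γ →* C(G)` a homomorphism into the center.  Let `φ` be the automorphism of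
`Γ × G` given by `φ (γ, g) = (γ₀ γ γ₀⁻¹, ρ γ * L g)`.  With `ψ g = L g * g⁻¹`
(injective on `C(G)`), `Γ' = ρ⁻¹(ψ(C(G)))`, and `θ = ψ⁻¹ ∘ ρ : Γ' → C(G)` (i.e.
`ψ (θ γ) = ρ γ`), the map `h (γ, g) = (γ, θ γ * g)` is an automorphism of
`Γ' × G`, `φ` restricts to an automorphism `φ'` of `Γ' × G`, and
`h ∘ φ' ∘ h⁻¹ = α × L` on `Γ' × G`.  In particular `Γ' = Γ` when `ψ` is
surjective. -/
theorem conjugate_to_product_automorphism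
    (Γ G : Type*) [Group Γ] [Group G] [Group.FG G] [Group.IsNilpotent G]
    (γ₀ : Γ) (L : G ≃* G) (hL : ∀ g : G, L g = g → g = 1)
    (ρ : Γ →* Subgroup.center G)
    (φ : (Γ × G) ≃* (Γ × G))
    (hφ : ∀ (γ : Γ) (g : G), φ (γ, g) = (γ₀ * γ * γ₀⁻¹, (ρ γ : G) * L g))
    (ψ : Subgroup.center G →* Subgroup.center G)
    (hψ : ∀ g : Subgroup.center G, (ψ g : G) = L (g : G) * (g : G)⁻¹)
    (θ : ↥(Subgroup.comap ρ ψ.range) →* Subgroup.center G)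
    (hθ : ∀ γ : ↥(Subgroup.comap ρ ψ.range), ψ (θ γ) = ρ (γ : Γ)) :
    -- `φ` maps `Γ' × G` into itself
    (∀ γ : Γ, γ ∈ Subgroup.comap ρ ψ.range →
      ∀ g : G, (φ (γ, g)).1 ∈ Subgroup.comap ρ ψ.range) ∧
    -- `h` is an automorphism of `Γ' × G`, `φ` restricts to `φ'` on `Γ' × G`,
    -- and `h ∘ φ' ∘ h⁻¹ = α × L`
    (∃ h : (↥(Subgroup.comap ρ ψ.range) × G) ≃* (↥(Subgroup.comap ρ ψ.range) × G),
      (∀ (γ : ↥(Subgroup.comap ρ ψ.range)) (g : G),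
        h (γ, g) = (γ, (θ γ : G) * g)) ∧
      ∃ φ' : (↥(Subgroup.comap ρ ψ.range) × G) ≃* (↥(Subgroup.comap ρ ψ.range) × G),
        (∀ (γ : ↥(Subgroup.comap ρ ψ.range)) (g : G),
          ((((φ' (γ, g)).1 : Γ)), (φ' (γ, g)).2) = φ ((γ : Γ), g)) ∧
        (∀ (γ : ↥(Subgroup.comap ρ ψ.range)) (g : G),
          ((((h (φ' (h.symm (γ, g)))).1 : Γ)), (h (φ' (h.symm (γ, g)))).2)
            = (γ₀ * (γ : Γ) * γ₀⁻¹, L g))) ∧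
    -- in particular `Γ' = Γ` if `ψ` is surjective
    (Function.Surjective ψ → Subgroup.comap ρ ψ.range = ⊤) := by
  have hρconj : ∀ (δ γ : Γ), ρ (δ * γ * δ⁻¹) = ρ γ := by
    intro δ γ
    rw [map_mul, map_mul, map_inv, (Subtype.ext (Subgroup.mem_center_iff.mp (ρ γ).2 (ρ δ : G)) : ρ δ * ρ γ = ρ γ * ρ δ), mul_inv_cancel_right]
  have hψinj : Function.Injective ψ := by
    intro a b hab
    have h1 : (ψ a : G) = (ψ b : G) := congrArg Subtype.val hab
    rw [hψ, hψ] at h1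
    have h2 : L ((a : G)⁻¹ * (b : G)) = (a : G)⁻¹ * (b : G) := by
      rw [map_mul, map_inv]
      have h3 : L (b : G) = L (a : G) * (a : G)⁻¹ * (b : G) := by
        rw [h1]; group
      rw [h3]; group
    have h4 := hL _ h2
    exact Subtype.ext (by rwa [inv_mul_eq_one] at h4)
  have hθeq : ∀ (γ δ : ↥(Subgroup.comap ρ ψ.range)), ρ (γ : Γ) = ρ (δ : Γ) → θ γ = θ δ :=
    fun γ δ hh => hψinj (by rw [hθ, hθ, hh])
  have hmemconj : ∀ (δ γ : Γ), γ ∈ Subgroup.comap ρ ψ.range →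
      δ * γ * δ⁻¹ ∈ Subgroup.comap ρ ψ.range := by
    intro δ γ hγ
    simpa [Subgroup.mem_comap, hρconj] using hγ
  refine ⟨?_, ⟨?_, ?_, ?_⟩, ?_⟩
  · intro γ hγ g
    rw [hφ]
    exact hmemconj γ₀ γ hγ
  · exact
    { toFun := fun p => (p.1, (θ p.1 : G) * p.2)
      invFun := fun p => (p.1, (θ p.1 : G)⁻¹ * p.2)
      left_inv := fun p => by simp
      right_inv := fun p => by simp
      map_mul' := fun p q => by
        refine Prod.ext rfl ?_
        show (θ (p.1 * q.1) : G) * (p.2 * q.2) = ((θ p.1 : G) * p.2) * ((θ q.1 : G) * q.2)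
        rw [map_mul]
        push_cast
        exact keycomm _ _ _ _ }
  · exact fun γ g => rfl
  · refine ⟨?_, ?_, ?_⟩
    exact
    { toFun := fun p => (⟨γ₀ * (p.1 : Γ) * γ₀⁻¹, hmemconj γ₀ _ p.1.2⟩,
        (ρ (p.1 : Γ) : G) * L p.2)
      invFun := fun p => (⟨γ₀⁻¹ * (p.1 : Γ) * γ₀, by
        simpa using hmemconj γ₀⁻¹ _ p.1.2⟩,
        L.symm ((ρ (p.1 : Γ) : G)⁻¹ * p.2))
      left_inv := fun p => by
        refine Prod.ext (Subtype.ext ?_) ?_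
        · show γ₀⁻¹ * (γ₀ * (p.1 : Γ) * γ₀⁻¹) * γ₀ = (p.1 : Γ); group
        · show L.symm ((ρ (γ₀ * (p.1 : Γ) * γ₀⁻¹) : G)⁻¹ * ((ρ (p.1 : Γ) : G) * L p.2)) = p.2
          rw [hρconj]; simp
      right_inv := fun p => by
        refine Prod.ext (Subtype.ext ?_) ?_
        · show γ₀ * (γ₀⁻¹ * (p.1 : Γ) * γ₀) * γ₀⁻¹ = (p.1 : Γ); group
        · show (ρ (γ₀⁻¹ * (p.1 : Γ) * γ₀) : G) *
            L (L.symm ((ρ (p.1 : Γ) : G)⁻¹ * p.2)) = p.2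
          have := hρconj γ₀⁻¹ (p.1 : Γ)
          rw [inv_inv] at this
          rw [this]; simp
      map_mul' := fun p q => by
        refine Prod.ext (Subtype.ext ?_) ?_
        · show γ₀ * ((p.1 : Γ) * (q.1 : Γ)) * γ₀⁻¹ =
            (γ₀ * (p.1 : Γ) * γ₀⁻¹) * (γ₀ * (q.1 : Γ) * γ₀⁻¹)
          group
        · show (ρ ((p.1 : Γ) * (q.1 : Γ)) : G) * L (p.2 * q.2) =
            ((ρ (p.1 : Γ) : G) * L p.2) * ((ρ (q.1 : Γ) : G) * L q.2)
          rw [map_mul, map_mul]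
          push_cast
          exact keycomm _ _ _ _ }
    · intro γ g
      rw [hφ]
      rfl
    · intro γ g
      refine Prod.ext rfl ?_
      show (θ ⟨γ₀ * (γ : Γ) * γ₀⁻¹, _⟩ : G) *
        ((ρ (γ : Γ) : G) * L ((θ γ : G)⁻¹ * g)) = L g
      have hδ : θ (⟨γ₀ * (γ : Γ) * γ₀⁻¹, hmemconj γ₀ _ γ.2⟩ :
          ↥(Subgroup.comap ρ ψ.range)) = θ γ :=
        hθeq _ _ (hρconj γ₀ (γ : Γ))
      rw [hδ, ← hθ γ, hψ, map_mul, map_inv]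
      have hc' : ∀ z : G, z * (θ γ : G)⁻¹ = (θ γ : G)⁻¹ * z :=
        fun z => Subgroup.mem_center_iff.mp (inv_mem (θ γ).2) z
      rw [hc' (L (θ γ : G))]
      group
  · intro hs
    rw [MonoidHom.range_eq_top.mpr hs, Subgroup.comap_top]
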